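/- For real $s > 0$ and reals $a > 0$, $n > 0$: $\int_0^{\infty} x^{s-1} e^{-ax} \sin(nx)\, dx = \frac{\Gamma(s)\,\sin\left(s \arctan(n/a)\right)}{(a^2+n^2)^{s/2}}$. -/

import Mathlib

open MeasureTheory Set Complex Filter

lemma mes_aux (s : ℝ) (b : ℂ) :
    AEStronglyMeasurable (fun t : ℝ => ((t ^ s : ℝ) : ℂ) * Complex.exp (-b * t))
      (volume.restrict (Ioi (0:ℝ))) := by
  apply Measurable.aestronglyMeasurable
  exact (Complex.measurable_ofReal.comp (measurable_id.pow_const s)).mul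
    (Complex.measurable_exp.comp ((measurable_const.mul Complex.measurable_ofReal)))

lemma intF (s : ℝ) (hs : 0 < s) (b : ℂ) (hb : 0 < b.re) :
    IntegrableOn (fun t : ℝ => ((t ^ (s-1) : ℝ) : ℂ) * Complex.exp (-b * t)) (Ioi (0:ℝ)) := by
  have hbound : IntegrableOn (fun t : ℝ => t ^ (s-1) * Real.exp (-b.re * t)) (Ioi (0:ℝ)) := by
    have := integrableOn_rpow_mul_exp_neg_mul_rpow (p := 1) (s := s - 1) (b := b.re)
      (by linarith) one_pos hb
    simpa using this
  refine (hbound.mono' (mes_aux (s-1) b) ?_)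
  filter_upwards [ae_restrict_mem measurableSet_Ioi] with t ht
  rw [mem_Ioi] at ht
  rw [norm_mul, Complex.norm_exp]
  have : (-b * ↑t).re = -b.re * t := by simp
  rw [this, Complex.norm_real, Real.norm_eq_abs, _root_.abs_of_nonneg (Real.rpow_nonneg ht.le _)]

lemma stepF (s : ℝ) (hs : 0 < s) (b : ℂ) (hb : 0 < b.re) :
    (s : ℂ) * ∫ t in Ioi (0:ℝ), ((t ^ (s-1) : ℝ) : ℂ) * Complex.exp (-b * t)
      = b * ∫ t in Ioi (0:ℝ), ((t ^ s : ℝ) : ℂ) * Complex.exp (-b * t) := by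
  have i1 := intF s hs b hb
  have i2 : IntegrableOn (fun t : ℝ => ((t ^ s : ℝ) : ℂ) * Complex.exp (-b * t)) (Ioi (0:ℝ)) := by
    simpa using intF (s+1) (by linarith) b hb
  set f : ℝ → ℂ := fun t => ((t ^ s : ℝ) : ℂ) * Complex.exp (-b * t) with hf
  set f' : ℝ → ℂ := fun t =>
    (s : ℂ) * (((t ^ (s-1) : ℝ) : ℂ) * Complex.exp (-b * t)) - b * (((t ^ s : ℝ) : ℂ) * Complex.exp (-b * t)) with hf'
  have key : ∫ t in Ioi (0:ℝ), f' t = 0 - f 0 := by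
    apply integral_Ioi_of_hasDerivAt_of_tendsto
    · apply ContinuousAt.continuousWithinAt
      apply ContinuousAt.mul
      · exact Complex.continuous_ofReal.continuousAt.comp
          (Real.continuousAt_rpow_const 0 s (Or.inr hs.le))
      · exact (Complex.continuous_exp.comp (continuous_const.mul Complex.continuous_ofReal)).continuousAt
    · intro t ht
      rw [mem_Ioi] at ht
      have h1 : HasDerivAt (fun t : ℝ => ((t ^ s : ℝ) : ℂ)) ((s * t ^ (s-1) : ℝ) : ℂ) t :=
        (Real.hasDerivAt_rpow_const (Or.inl ht.ne')).ofReal_comp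
      have h2 : HasDerivAt (fun t : ℝ => Complex.exp (-b * t)) (-b * Complex.exp (-b * t)) t := by
        have h3 : HasDerivAt (fun t : ℝ => -b * (t:ℂ)) (-b) t := by
          simpa using ((hasDerivAt_id t).ofReal_comp.const_mul (-b))
        simpa [mul_comm] using h3.cexp
      have := h1.mul h2
      refine this.congr_deriv ?_
      symm
      simp only [hf']
      push_cast
      ring
    · exact (i1.const_mul _).sub (i2.const_mul b)
    · have h0 : Tendsto (fun t : ℝ => t ^ s * Real.exp (-b.re * t)) atTop (nhds 0) :=
        tendsto_rpow_mul_exp_neg_mul_atTop_nhds_zero s b.re hb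
      rw [tendsto_zero_iff_norm_tendsto_zero]
      apply squeeze_zero' (Eventually.of_forall fun t => norm_nonneg _) _ h0
      filter_upwards [eventually_ge_atTop (0:ℝ)] with t ht
      rw [hf]
      simp only
      rw [norm_mul, Complex.norm_exp]
      have : (-b * ↑t).re = -b.re * t := by simp
      rw [this, Complex.norm_real, Real.norm_eq_abs, _root_.abs_of_nonneg (Real.rpow_nonneg ht _)]
  have hf0 : f 0 = 0 := by simp [hf, Real.zero_rpow hs.ne']
  rw [hf0, sub_zero, hf', integral_sub (i1.const_mul _) (i2.const_mul b),
    integral_const_mul, integral_const_mul, sub_eq_zero] at key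
  exact key

lemma derivF (s : ℝ) (hs : 0 < s) (b : ℂ) (hb : 0 < b.re) :
    HasDerivAt (fun z : ℂ => ∫ t in Ioi (0:ℝ), ((t ^ (s-1) : ℝ) : ℂ) * Complex.exp (-z * t))
      (-∫ t in Ioi (0:ℝ), ((t ^ s : ℝ) : ℂ) * Complex.exp (-b * t)) b := by
  set F : ℂ → ℝ → ℂ := fun z t => ((t ^ (s-1) : ℝ) : ℂ) * Complex.exp (-z * t) with hF
  set F' : ℂ → ℝ → ℂ := fun z t => ((t ^ (s-1) : ℝ) : ℂ) * (Complex.exp (-z * t) * (-t)) with hF'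
  set bound : ℝ → ℝ := fun t => t ^ s * Real.exp (-(b.re/2) * t) with hbd
  have hε : 0 < b.re / 2 := by linarith
  have hre : ∀ z ∈ Metric.ball b (b.re/2), b.re/2 < z.re := by
    intro z hz
    have := (Complex.abs_re_le_norm (z - b)).trans_lt (by simpa [Complex.dist_eq] using hz)
    rw [Complex.sub_re] at this
    have h2 := abs_lt.mp this
    linarith [h2.1]
  have main := hasDerivAt_integral_of_dominated_loc_of_deriv_le (F := F) (F' := F')
    (x₀ := b) (bound := bound) (μ := volume.restrict (Ioi (0:ℝ))) (Metric.ball_mem_nhds b hε)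
    (Eventually.of_forall fun z => mes_aux (s-1) z)
    (intF s hs b hb)
    (by
      apply Measurable.aestronglyMeasurable
      exact (Complex.measurable_ofReal.comp (measurable_id.pow_const (s-1))).mul
        ((Complex.measurable_exp.comp (measurable_const.mul Complex.measurable_ofReal)).mul
          (Complex.measurable_ofReal.neg)))
    (by
      filter_upwards [ae_restrict_mem measurableSet_Ioi] with t ht z hz
      rw [mem_Ioi] at ht
      have hzre := hre z hz
      rw [hF']
      simp only
      rw [norm_mul, norm_mul, Complex.norm_exp]
      have h1 : (-z * ↑t).re = -z.re * t := by simp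
      have h2 : ‖(-(t:ℂ))‖ = t := by
        rw [norm_neg, Complex.norm_real, Real.norm_eq_abs, _root_.abs_of_nonneg ht.le]
      rw [h1, Complex.norm_real, Real.norm_eq_abs,
        _root_.abs_of_nonneg (Real.rpow_nonneg ht.le _), h2, hbd]
      simp only
      have hts : ((t:ℝ)^s : ℝ) = t ^ (s-1) * t := by
        rw [← Real.rpow_add_one ht.ne' (s-1), sub_add_cancel]
      have hexp : Real.exp (-z.re * t) ≤ Real.exp (-(b.re/2) * t) :=
        Real.exp_le_exp.mpr (by nlinarith)
      calc t ^ (s-1) * (Real.exp (-z.re * t) * t)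
          = t^(s-1) * t * Real.exp (-z.re*t) := by ring
        _ ≤ t^(s-1) * t * Real.exp (-(b.re/2)*t) := by
            apply mul_le_mul_of_nonneg_left hexp
            positivity
        _ = t ^ s * Real.exp (-(b.re/2)*t) := by rw [hts] )
    (by
      have : IntegrableOn bound (Ioi (0:ℝ)) := by
        have := integrableOn_rpow_mul_exp_neg_mul_rpow (p := 1) (s := s) (b := b.re/2)
          (by linarith) one_pos hε
        simpa [hbd] using this
      exact this)
    (by
      filter_upwards [ae_restrict_mem measurableSet_Ioi] with t ht z hz
      have hd : HasDerivAt (fun z : ℂ => Complex.exp (-z * t)) (Complex.exp (-z * t) * (-t)) z := by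
        have : HasDerivAt (fun z : ℂ => -z * (t:ℂ)) (-t) z := by
          simpa using (hasDerivAt_id z).neg.mul_const (t:ℂ)
        simpa using this.cexp
      exact hd.const_mul _)
  have := main.2
  refine this.congr_deriv ?_
  symm
  rw [← integral_neg]
  apply setIntegral_congr_fun measurableSet_Ioi
  intro t ht
  rw [mem_Ioi] at ht
  rw [hF']
  simp only
  rw [show ((t:ℝ)^s : ℝ) = t ^ (s-1) * t by
    rw [← Real.rpow_add_one ht.ne' (s-1), sub_add_cancel]]
  push_cast
  ring

lemma Fval (s a n : ℝ) (hs : 0 < s) (ha : 0 < a) :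
    ∫ t in Ioi (0:ℝ), ((t ^ (s-1) : ℝ) : ℂ) * Complex.exp (-(↑a - ↑n*I) * t)
      = (Real.Gamma s : ℂ) * (↑a - ↑n*I) ^ (-(s:ℂ)) := by
  set F : ℂ → ℂ := fun z => ∫ t in Ioi (0:ℝ), ((t ^ (s-1) : ℝ) : ℂ) * Complex.exp (-z * t) with hFdef
  set g : ℝ → ℂ := fun u => F (↑a - ↑u*I) * (↑a - ↑u*I) ^ (s:ℂ) with hgdef
  have hre : ∀ u : ℝ, ((↑a - ↑u*I : ℂ)).re = a := by intro u; simp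
  have hb0 : ∀ u : ℝ, (↑a - ↑u*I : ℂ) ≠ 0 := by
    intro u h
    have := hre u
    rw [h] at this
    simp at this
    exact ha.ne this
  have hg : ∀ u : ℝ, HasDerivAt g 0 u := by
    intro u
    set b : ℂ := ↑a - ↑u*I with hbdef
    have hbre : 0 < b.re := by rw [hre]; exact ha
    have hder_b : HasDerivAt (fun u : ℝ => (↑a - ↑u*I : ℂ)) (-I) u := by
      simpa using (((hasDerivAt_id u).ofReal_comp.mul_const I).const_sub (a:ℂ))
    have h1 : HasDerivAt (fun u : ℝ => F (↑a - ↑u*I))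
        ((-I) • (-∫ t in Ioi (0:ℝ), ((t ^ s : ℝ) : ℂ) * Complex.exp (-b * t))) u :=
      by have := HasDerivAt.scomp u (derivF s hs b hbre) hder_b; exact this
    have h2 : HasDerivAt (fun u : ℝ => ((↑a - ↑u*I : ℂ)) ^ (s:ℂ))
        ((-I) • ((s:ℂ) * b ^ ((s:ℂ)-1))) u := by
      exact HasDerivAt.scomp u ((Complex.hasStrictDerivAt_cpow_const
        (show ((a:ℂ) - ↑u*I) ∈ Complex.slitPlane by
          rw [Complex.mem_slitPlane_iff]; exact Or.inl hbre)).hasDerivAt) hder_b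
    have h3 := h1.mul h2
    have hstep := stepF s hs b hbre
    have hpow : b * b ^ ((s:ℂ)-1) = b ^ (s:ℂ) := by
      have h := Complex.cpow_add 1 ((s:ℂ)-1) (hb0 u)
      rw [Complex.cpow_one] at h
      rw [← h]
      congr 1
      ring
    have : ((-I) • (-∫ t in Ioi (0:ℝ), ((t ^ s : ℝ) : ℂ) * Complex.exp (-b * t))) * b ^ (s:ℂ)
        + F b * ((-I) • ((s:ℂ) * b ^ ((s:ℂ)-1))) = 0 := by
      simp only [smul_eq_mul]
      have e1 : F b * (-I * ((s:ℂ) * b ^ ((s:ℂ)-1)))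
          = -I * (((s:ℂ) * F b) * b ^ ((s:ℂ)-1)) := by ring
      rw [e1, hstep]
      have e2 : (b * ∫ t in Ioi (0:ℝ), ((t ^ s : ℝ) : ℂ) * Complex.exp (-b * t)) * b ^ ((s:ℂ)-1)
          = (∫ t in Ioi (0:ℝ), ((t ^ s : ℝ) : ℂ) * Complex.exp (-b * t)) * (b * b ^ ((s:ℂ)-1)) := by
        ring
      rw [e2, hpow]
      ring
    have h4 : HasDerivAt g (((-I) • (-∫ t in Ioi (0:ℝ), ((t ^ s : ℝ) : ℂ) * Complex.exp (-b * t))) * b ^ (s:ℂ)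
        + F b * ((-I) • ((s:ℂ) * b ^ ((s:ℂ)-1)))) u := h3
    rw [this] at h4
    exact h4
  have hconst : g 0 = g n := by
    have hdiff : Differentiable ℝ g := fun u => (hg u).differentiableAt
    exact is_const_of_deriv_eq_zero hdiff (fun u => (hg u).deriv) 0 n
  have hg0 : g 0 = (Real.Gamma s : ℂ) := by
    rw [hgdef]
    simp only [Complex.ofReal_zero, zero_mul, sub_zero]
    have hreal : F (a:ℂ) = (1/(a:ℂ)) ^ (s:ℂ) * Complex.Gamma (s:ℂ) := by
      rw [hFdef]
      simp only
      rw [← Complex.integral_cpow_mul_exp_neg_mul_Ioi (a := (s:ℂ)) (r := a)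
        (by simpa using hs) ha]
      apply setIntegral_congr_fun measurableSet_Ioi
      intro t ht
      rw [mem_Ioi] at ht
      show ((t ^ (s-1) : ℝ) : ℂ) * Complex.exp (-(a:ℂ) * t) = (t:ℂ) ^ ((s:ℂ)-1) * Complex.exp (-((a:ℂ) * t))
      rw [Complex.ofReal_cpow ht.le]
      push_cast
      ring_nf
    rw [hreal, Complex.Gamma_ofReal]
    have hone : (1/(a:ℂ)) ^ (s:ℂ) * ((a:ℝ) : ℂ) ^ (s:ℂ) = 1 := by
      rw [show (1/(a:ℂ)) = ((1/a : ℝ) : ℂ) by push_cast; ring]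
      rw [← Complex.mul_cpow_ofReal_nonneg (by positivity) ha.le]
      rw [show ((1/a : ℝ) : ℂ) * ((a:ℝ):ℂ) = ((1/a * a : ℝ) : ℂ) by push_cast; ring]
      rw [one_div, inv_mul_cancel₀ ha.ne', Complex.ofReal_one, Complex.one_cpow]
    rw [mul_right_comm, hone, one_mul]
  have hkey : F (↑a - ↑n*I) * (↑a - ↑n*I) ^ (s:ℂ) = (Real.Gamma s : ℂ) := by
    rw [← hg0, hconst]
  have hne : ((↑a - ↑n*I : ℂ)) ^ (s:ℂ) ≠ 0 := by
    simp [Complex.cpow_eq_zero_iff, hb0 n]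
  rw [Complex.cpow_neg]
  show F (↑a - ↑n*I) = (Real.Gamma s : ℂ) * ((↑a - ↑n*I) ^ (s:ℂ))⁻¹
  rw [eq_mul_inv_iff_mul_eq₀ hne]
  exact hkey

theorem mellin_exp_sin (s a n : ℝ) (hs : 0 < s) (ha : 0 < a) (hn : 0 < n) :
    ∫ x in Set.Ioi (0 : ℝ), x ^ (s - 1) * Real.exp (-a * x) * Real.sin (n * x) =
      Real.Gamma s * Real.sin (s * Real.arctan (n / a)) / (a ^ 2 + n ^ 2) ^ (s / 2) := by
  set b : ℂ := ↑a - ↑n*I with hbdef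
  have hbre : b.re = a := by simp [hbdef]
  have hb0 : b ≠ 0 := by
    intro h
    have : b.re = 0 := by rw [h]; simp
    rw [hbre] at this
    exact ha.ne' this
  have hint := intF s hs b (by rw [hbre]; exact ha)
  have him : ∫ x in Ioi (0:ℝ), x ^ (s - 1) * Real.exp (-a * x) * Real.sin (n * x)
      = (∫ t in Ioi (0:ℝ), ((t ^ (s-1) : ℝ) : ℂ) * Complex.exp (-b * t)).im := by
    have hcc := Complex.imCLM.integral_comp_comm hint
    simp only [Complex.imCLM_apply] at hcc
    rw [← hcc]
    apply setIntegral_congr_fun measurableSet_Ioi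
    intro t ht
    show t ^ (s-1) * Real.exp (-a * t) * Real.sin (n * t)
      = (((t ^ (s-1) : ℝ) : ℂ) * Complex.exp (-b * t)).im
    rw [Complex.im_ofReal_mul, Complex.exp_im]
    have h1 : (-b * ↑t : ℂ).re = -a * t := by simp [hbdef]
    have h2 : (-b * ↑t : ℂ).im = n * t := by simp [hbdef]
    rw [h1, h2]
    ring
  have harg : b.arg = -Real.arctan (n/a) := by
    have h2 : |b.arg| < Real.pi/2 :=
      Complex.abs_arg_lt_pi_div_two_iff.mpr (Or.inl (by rw [hbre]; exact ha))
    rw [abs_lt] at h2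
    rw [← Real.arctan_tan h2.1 h2.2, Complex.tan_arg]
    have : b.im / b.re = -(n/a) := by
      rw [hbre]
      simp [hbdef, neg_div]
    rw [this, Real.arctan_neg]
  have habs : ‖b‖ = Real.sqrt (a^2 + n^2) := by
    rw [Complex.norm_def]
    congr 1
    simp [hbdef, Complex.normSq_apply]
    ring
  have hzim : (b ^ (-(s:ℂ))).im
      = Real.exp (Real.log ‖b‖ * (-s)) * Real.sin (b.arg * (-s)) := by
    rw [Complex.cpow_def_of_ne_zero hb0, Complex.exp_im]
    congr 2
    · simp [Complex.mul_re, Complex.log_re, Complex.log_im]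
    · simp [Complex.mul_im, Complex.log_re, Complex.log_im]
  rw [him, Fval s a n hs ha, ← hbdef, Complex.im_ofReal_mul, hzim, harg, habs,
    Real.log_sqrt (by positivity)]
  have hexp : Real.exp (Real.log (a^2+n^2) / 2 * (-s)) = ((a^2+n^2) ^ (s/2))⁻¹ := by
    rw [← Real.rpow_neg (by positivity), Real.rpow_def_of_pos (by positivity)]
    ring_nf
  rw [hexp]
  have hsin : Real.sin (-Real.arctan (n/a) * (-s)) = Real.sin (s * Real.arctan (n/a)) := by
    ring_nf
  rw [hsin]
  ring
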